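/- In the Mallows model with fixed 0 < θ < 1, for a fixed positive integer j and k = N−j, the success probability satisfies lim_{N→∞} W(N, N−j)/[N]_θ! = j·θ^{j−1}·(1−θ). -/

import Mathlib

open Finset


/-- Number of left-to-right maxima of the permutation `π` (one-line notation
`i ↦ π i`): positions `j` such that `π i < π j` for all `i < j`. -/
def lrmaxCount {N : ℕ} (π : Equiv.Perm (Fin N)) : ℕ :=
  (Finset.univ.filter (fun j : Fin N => ∀ i, i < j → π i < π j)).card

/-- Number of inversions of `π`: pairs of positions `i < j` with `π i > π j`. -/
def invCount {N : ℕ} (π : Equiv.Perm (Fin N)) : ℕ :=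
  (Finset.univ.filter (fun p : Fin N × Fin N => p.1 < p.2 ∧ π p.2 < π p.1)).card

/-- Position `j` is a left-to-right maximum of `π`. -/
def IsLRMax {N : ℕ} (π : Equiv.Perm (Fin N)) (j : Fin N) : Prop :=
  ∀ i, i < j → π i < π j

/-- `π` is `k`-winnable: the positional strategy that rejects the first `k`
candidates (positions `0,…,k-1`) and accepts the next left-to-right maximum
thereafter selects the position of the maximal value. -/
def KWinnable {N : ℕ} (k : ℕ) (π : Equiv.Perm (Fin N)) : Prop :=
  ∃ j : Fin N, k ≤ (j : ℕ) ∧ IsLRMax π j ∧ (∀ i, π i ≤ π j) ∧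
    ∀ i : Fin N, k ≤ (i : ℕ) → i < j → ¬ IsLRMax π i

open Classical in
/-- Ewens-weighted count of `k`-winnable permutations:
`W(N,k) = Σ_{k-winnable π ∈ S_N} θ^{lrmax(π)}`. -/
noncomputable def W (R : Type*) [CommRing R] (N k : ℕ) (θ : R) : R :=
  ∑ π ∈ Finset.univ.filter (fun π : Equiv.Perm (Fin N) => KWinnable k π),
    θ ^ lrmaxCount π

/-- θ-analogue `[n]_θ = 1 + θ + ⋯ + θ^{n-1}`. -/
def tA (n : ℕ) (θ : ℝ) : ℝ := ∑ m ∈ Finset.range n, θ ^ m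

/-- θ-factorial `[m]_θ! = [m]_θ [m-1]_θ ⋯ [1]_θ`. -/
def qfact (m : ℕ) (θ : ℝ) : ℝ := ∏ n ∈ Finset.range m, tA (n + 1) θ

open Classical in
/-- Mallows-weighted count of `k`-winnable permutations:
`W(N,k) = Σ_{k-winnable π ∈ S_N} θ^{inv(π)}`. -/
noncomputable def WM (N k : ℕ) (θ : ℝ) : ℝ :=
  ∑ π ∈ Finset.univ.filter (fun π : Equiv.Perm (Fin N) => KWinnable k π),
    θ ^ invCount π


/-! ### The Lehmer code -/

def codeF {N : ℕ} (π : Equiv.Perm (Fin N)) (i : Fin N) : Finset (Fin N) :=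
  Finset.univ.filter (fun k => k < i ∧ π i < π k)

def code {N : ℕ} (π : Equiv.Perm (Fin N)) (i : Fin N) : ℕ := (codeF π i).card

lemma code_le {N : ℕ} (π : Equiv.Perm (Fin N)) (i : Fin N) : code π i ≤ (i : ℕ) := by
  have h : codeF π i ⊆ Finset.Iio i := by
    intro k hk
    simp only [codeF, mem_filter] at hk
    exact Finset.mem_Iio.2 hk.2.1
  calc code π i ≤ (Finset.Iio i).card := Finset.card_le_card h
    _ = i := Fin.card_Iio _

lemma invCount_eq_sum_code {N : ℕ} (π : Equiv.Perm (Fin N)) :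
    invCount π = ∑ i : Fin N, code π i := by
  rw [invCount, Finset.card_eq_sum_card_fiberwise
    (f := fun p : Fin N × Fin N => p.2) (t := Finset.univ) (fun _ _ => mem_univ _)]
  refine Finset.sum_congr rfl (fun i _ => ?_)
  refine Finset.card_bij (fun p _ => p.1) ?_ ?_ ?_
  · intro p hp
    simp only [mem_filter, mem_univ, true_and] at hp ⊢
    simp only [codeF, mem_filter, mem_univ, true_and]
    rcases hp with ⟨⟨h1, h2⟩, h3⟩
    rw [h3] at h1 h2
    exact ⟨h1, h2⟩
  · intro p hp q hq hpq
    simp only [mem_filter, mem_univ, true_and] at hp hq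
    exact Prod.ext hpq (hp.2.trans hq.2.symm)
  · intro k hk
    simp only [codeF, mem_filter, mem_univ, true_and] at hk
    exact ⟨(k, i), by simp [hk], rfl⟩

lemma isLRMax_iff_code_eq_zero {N : ℕ} (π : Equiv.Perm (Fin N)) (i : Fin N) :
    IsLRMax π i ↔ code π i = 0 := by
  rw [code, Finset.card_eq_zero, codeF, Finset.filter_eq_empty_iff]
  constructor
  · intro h k _
    push_neg
    intro hki
    exact le_of_lt (h k hki)
  · intro h k hki
    have := h (mem_univ k)
    push_neg at this
    have h2 := this hki
    rcases lt_or_eq_of_le h2 with h3 | h3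
    · exact h3
    · exact absurd (π.injective h3) (ne_of_lt hki)

lemma code_eq_card_filter_image {N : ℕ} (π : Equiv.Perm (Fin N)) (i : Fin N) :
    code π i =
      (((Finset.univ.filter (fun k : Fin N => k ≤ i)).image π).filter
        (fun v => π i < v)).card := by
  rw [code, Finset.filter_image, Finset.card_image_of_injective _ π.injective]
  congr 1
  ext k
  simp only [codeF, mem_filter, mem_univ, true_and, Function.comp]
  constructor
  · rintro ⟨h1, h2⟩; exact ⟨le_of_lt h1, h2⟩
  · rintro ⟨h1, h2⟩
    refine ⟨lt_of_le_of_ne h1 ?_, h2⟩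
    rintro rfl
    exact lt_irrefl _ h2

lemma code_injective {N : ℕ} : Function.Injective (fun π : Equiv.Perm (Fin N) => code π) := by
  intro π π' h
  simp only at h
  by_contra hne
  -- largest index where they differ
  have hD : (Finset.univ.filter (fun k : Fin N => π k ≠ π' k)).Nonempty := by
    by_contra hD
    apply hne
    ext k
    rw [Finset.not_nonempty_iff_eq_empty, Finset.filter_eq_empty_iff] at hD
    have := hD (mem_univ k)
    push_neg at this
    exact congrArg Fin.val this
  set i := (Finset.univ.filter (fun k : Fin N => π k ≠ π' k)).max' hD with hi
  have hiD : π i ≠ π' i := by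
    have := (Finset.univ.filter (fun k : Fin N => π k ≠ π' k)).max'_mem hD
    rw [← hi, mem_filter] at this
    exact this.2
  have hgt : ∀ k, i < k → π k = π' k := by
    intro k hk
    by_contra hkne
    have : k ≤ i := Finset.le_max' _ k (by simp [hkne])
    exact absurd hk (not_lt.2 this)
  -- the images of {k ≤ i} agree
  have himg : (Finset.univ.filter (fun k : Fin N => k ≤ i)).image π
      = (Finset.univ.filter (fun k : Fin N => k ≤ i)).image π' := by
    ext v
    simp only [Finset.mem_image, mem_filter, mem_univ, true_and]
    constructor
    · rintro ⟨k, hk, rfl⟩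
      refine ⟨π'.symm (π k), ?_, by simp⟩
      by_contra hgt'
      push_neg at hgt'
      have := hgt _ hgt'
      rw [Equiv.apply_symm_apply] at this
      have : k = π'.symm (π k) := π.injective this.symm
      rw [← this] at hgt'
      exact absurd hk (not_le.2 hgt')
    · rintro ⟨k, hk, rfl⟩
      refine ⟨π.symm (π' k), ?_, by simp⟩
      by_contra hgt'
      push_neg at hgt'
      have := hgt _ hgt'
      have h2 : k = π.symm (π' k) := π'.injective (this.symm.trans (Equiv.apply_symm_apply _ _)).symm
      rw [← h2] at hgt'
      exact absurd hk (not_le.2 hgt')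
  -- wlog π i < π' i
  have key : ∀ (σ σ' : Equiv.Perm (Fin N)),
      (Finset.univ.filter (fun k : Fin N => k ≤ i)).image σ
        = (Finset.univ.filter (fun k : Fin N => k ≤ i)).image σ' →
      σ i < σ' i → code σ' i < code σ i := by
    intro σ σ' himg hlt
    rw [code_eq_card_filter_image, code_eq_card_filter_image, ← himg]
    apply Finset.card_lt_card
    constructor
    · apply Finset.monotone_filter_right
      intro v _ hv
      exact lt_trans hlt hv
    · intro hsub
      have hmem : σ' i ∈ ((Finset.univ.filter (fun k : Fin N => k ≤ i)).image σ).filter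
          (fun v => σ i < v) := by
        rw [Finset.mem_filter, himg]
        exact ⟨Finset.mem_image.2 ⟨i, by simp, rfl⟩, hlt⟩
      have := hsub hmem
      rw [Finset.mem_filter] at this
      exact lt_irrefl _ this.2
  have hcode : code π i = code π' i := congrFun h i
  rcases lt_or_gt_of_ne hiD with hlt | hlt
  · have := key π π' himg hlt; omega
  · have := key π' π himg.symm hlt; omega

/-! ### Winnability in terms of the code -/

lemma kWinnable_iff_code {N k : ℕ} (π : Equiv.Perm (Fin N)) :
    KWinnable k π ↔ ∃ p : Fin N, k ≤ (p : ℕ) ∧ code π p = 0 ∧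
      ∀ i : Fin N, k ≤ (i : ℕ) → i ≠ p → code π i ≠ 0 := by
  constructor
  · rintro ⟨j, hkj, hmax, hglob, hnolr⟩
    refine ⟨j, hkj, (isLRMax_iff_code_eq_zero π j).1 hmax, ?_⟩
    intro i hki hij hc
    rcases lt_or_gt_of_ne hij with hlt | hlt
    · exact hnolr i hki hlt ((isLRMax_iff_code_eq_zero π i).2 hc)
    · have hj : j ∈ codeF π i := by
        simp only [codeF, mem_filter, mem_univ, true_and]
        refine ⟨hlt, lt_of_le_of_ne (hglob i) (fun h => (ne_of_gt hlt) (π.injective h))⟩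
      rw [code, Finset.card_eq_zero] at hc
      simp [hc] at hj
  · rintro ⟨p, hkp, hcp, hother⟩
    obtain ⟨M, -, hM⟩ := Finset.exists_max_image Finset.univ π ⟨p, mem_univ p⟩
    have hMlr : code π M = 0 := by
      rw [← isLRMax_iff_code_eq_zero]
      intro i hi
      exact lt_of_le_of_ne (hM i (mem_univ i)) (fun h => (ne_of_lt hi) (π.injective h))
    have hkM : k ≤ (M : ℕ) := by
      by_contra hkM
      push_neg at hkM
      have hMp : M < p := by
        rw [Fin.lt_def]; omega
      have hmem : M ∈ codeF π p := by
        simp only [codeF, mem_filter, mem_univ, true_and]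
        refine ⟨hMp, lt_of_le_of_ne (hM p (mem_univ p)) ?_⟩
        intro h
        exact (ne_of_lt hMp) (π.injective h).symm
      rw [code, Finset.card_eq_zero] at hcp
      simp [hcp] at hmem
    have hMp : M = p := by
      by_contra hne
      exact hother M hkM hne hMlr
    subst hMp
    exact ⟨M, hkM, (isLRMax_iff_code_eq_zero π M).2 hMlr, fun i => hM i (mem_univ i),
      fun i hki hiM hlr =>
        hother i hki (ne_of_lt hiM) ((isLRMax_iff_code_eq_zero π i).1 hlr)⟩

/-! ### The code bijection -/

def codePi {N : ℕ} (π : Equiv.Perm (Fin N)) : (i : Fin N) → Fin ((i : ℕ) + 1) :=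
  fun i => ⟨code π i, Nat.lt_succ_of_le (code_le π i)⟩

lemma codePi_bijective {N : ℕ} : Function.Bijective (codePi (N := N)) := by
  rw [Fintype.bijective_iff_injective_and_card]
  constructor
  · intro π π' h
    apply code_injective
    funext i
    exact congrArg Fin.val (congrFun h i)
  · rw [Fintype.card_perm, Fintype.card_pi, Fintype.card_fin]
    simp only [Fintype.card_fin]
    rw [Fin.prod_univ_eq_prod_range (fun i => i + 1) N,
      Finset.prod_range_add_one_eq_factorial]

def QCode {N : ℕ} (k : ℕ) (c : (i : Fin N) → Fin ((i : ℕ) + 1)) : Prop :=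
  ∃ p : Fin N, k ≤ (p : ℕ) ∧ (c p : ℕ) = 0 ∧
    ∀ i : Fin N, k ≤ (i : ℕ) → i ≠ p → (c i : ℕ) ≠ 0

open Classical in
lemma WM_eq_sum_codes (N k : ℕ) (θ : ℝ) :
    WM N k θ = ∑ c ∈ Finset.univ.filter (QCode k (N := N)),
      ∏ i : Fin N, θ ^ ((c i : ℕ)) := by
  rw [WM]
  refine Finset.sum_bij (fun π _ => codePi π) ?_ ?_ ?_ ?_
  · intro π hπ
    simp only [mem_filter, mem_univ, true_and] at hπ ⊢
    rw [kWinnable_iff_code] at hπ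
    exact hπ
  · intro π _ π' _ h
    exact codePi_bijective.1 h
  · intro c hc
    obtain ⟨π, rfl⟩ := codePi_bijective.2 c
    refine ⟨π, ?_, rfl⟩
    simp only [mem_filter, mem_univ, true_and] at hc ⊢
    rw [kWinnable_iff_code]
    exact hc
  · intro π _
    rw [invCount_eq_sum_code, ← Finset.prod_pow_eq_pow_sum]
    rfl

/-! ### Evaluating the weighted sum -/

lemma tA_succ (n : ℕ) (θ : ℝ) : tA (n + 1) θ = 1 + θ * tA n θ := by
  rw [tA, tA, Finset.sum_range_succ', pow_zero, Finset.mul_sum, add_comm]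
  congr 1
  exact Finset.sum_congr rfl (fun m _ => by ring)

open Classical in
lemma filter_QCode_eq (N k : ℕ) :
    Finset.univ.filter (QCode k (N := N)) =
      (Finset.univ.filter (fun p : Fin N => k ≤ (p : ℕ))).biUnion
        (fun p => Fintype.piFinset (fun i : Fin N =>
          if i = p then {0}
          else if k ≤ (i : ℕ) then Finset.univ.filter (fun x : Fin ((i : ℕ) + 1) => (x : ℕ) ≠ 0)
          else Finset.univ)) := by
  ext c
  simp only [mem_filter, mem_univ, true_and, Finset.mem_biUnion, Fintype.mem_piFinset, QCode]
  constructor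
  · rintro ⟨p, hkp, hcp, hrest⟩
    refine ⟨p, hkp, fun i => ?_⟩
    by_cases hip : i = p
    · subst hip
      simp only [if_true, Finset.mem_singleton]
      rw [Fin.ext_iff]; simpa using hcp
    · rw [if_neg hip]
      by_cases hki : k ≤ (i : ℕ)
      · rw [if_pos hki]
        simp only [mem_filter, mem_univ, true_and]
        exact hrest i hki hip
      · rw [if_neg hki]; exact mem_univ _
  · rintro ⟨p, hp, hall⟩
    refine ⟨p, hp, ?_, ?_⟩
    · have := hall p
      rw [if_pos rfl, Finset.mem_singleton] at this
      rw [this]; rfl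
    · intro i hki hip
      have := hall i
      rw [if_neg hip, if_pos hki, mem_filter] at this
      exact this.2

open Classical in
lemma WM_formula (N k : ℕ) (θ : ℝ) :
    WM N k θ = qfact k θ *
      ∑ p ∈ Finset.Ico k N, ∏ i ∈ (Finset.Ico k N).erase p, (θ * tA i θ) := by
  classical
  rw [WM_eq_sum_codes, filter_QCode_eq]
  rw [Finset.sum_biUnion ?hdisj]
  case hdisj =>
    intro p hp p' hp' hne
    simp only [coe_filter, mem_univ, true_and, Set.mem_setOf_eq] at hp hp'
    refine Finset.disjoint_left.2 (fun c hc hc' => ?_)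
    rw [Fintype.mem_piFinset] at hc hc'
    have h1 := hc p
    rw [if_pos rfl, Finset.mem_singleton] at h1
    have h2 := hc' p
    rw [if_neg hne, if_pos hp, mem_filter] at h2
    exact h2.2 (by rw [h1]; rfl)
  -- inner sums
  have hinner : ∀ p ∈ Finset.univ.filter (fun p : Fin N => k ≤ (p : ℕ)),
      (∑ c ∈ Fintype.piFinset (fun i : Fin N =>
          if i = p then ({0} : Finset (Fin ((i : ℕ) + 1)))
          else if k ≤ (i : ℕ) then Finset.univ.filter (fun x : Fin ((i : ℕ) + 1) => (x : ℕ) ≠ 0)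
          else Finset.univ), ∏ i : Fin N, θ ^ ((c i : ℕ)))
        = ∏ m ∈ Finset.range N,
            (if m = (p : ℕ) then 1 else if k ≤ m then θ * tA m θ else tA (m + 1) θ) := by
    intro p hp
    have hps := Finset.prod_univ_sum (fun i : Fin N =>
        if i = p then ({0} : Finset (Fin ((i : ℕ) + 1)))
        else if k ≤ (i : ℕ) then Finset.univ.filter (fun x : Fin ((i : ℕ) + 1) => (x : ℕ) ≠ 0)
        else Finset.univ) (fun i (x : Fin ((i : ℕ) + 1)) => θ ^ (x : ℕ))
    rw [← hps]
    rw [← Fin.prod_univ_eq_prod_range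
      (fun m => if m = (p : ℕ) then (1 : ℝ) else if k ≤ m then θ * tA m θ else tA (m + 1) θ) N]
    refine Finset.prod_congr rfl (fun i _ => ?_)
    by_cases hip : i = p
    · subst hip
      rw [if_pos rfl, if_pos rfl]
      simp
    · have hipv : (i : ℕ) ≠ (p : ℕ) := fun h => hip (Fin.ext h)
      rw [if_neg hip, if_neg hipv]
      by_cases hki : k ≤ (i : ℕ)
      · rw [if_pos hki, if_pos hki]
        -- sum over nonzero elements of Fin (i+1)
        have h0 : Finset.univ.filter (fun x : Fin ((i : ℕ) + 1) => (x : ℕ) ≠ 0)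
            = Finset.univ.erase (0 : Fin ((i : ℕ) + 1)) := by
          ext x
          simp only [mem_filter, mem_univ, true_and, Finset.mem_erase, and_true]
          constructor
          · intro h hx; exact h (by rw [hx]; rfl)
          · intro h hx; exact h (Fin.ext hx)
        rw [h0]
        have h1 : (∑ x ∈ Finset.univ.erase (0 : Fin ((i : ℕ) + 1)), θ ^ ((x : ℕ)))
            + θ ^ ((0 : Fin ((i : ℕ) + 1)) : ℕ) = ∑ x : Fin ((i : ℕ) + 1), θ ^ ((x : ℕ)) :=
          Finset.sum_erase_add _ _ (mem_univ _)
        have h2 : (∑ x : Fin ((i : ℕ) + 1), θ ^ ((x : ℕ))) = tA ((i : ℕ) + 1) θ := by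
          rw [tA, Fin.sum_univ_eq_sum_range (fun m => θ ^ m) ((i : ℕ) + 1)]
        rw [h2] at h1
        have : θ ^ ((0 : Fin ((i : ℕ) + 1)) : ℕ) = 1 := by simp
        rw [this] at h1
        rw [tA_succ] at h1
        linarith
      · rw [if_neg hki, if_neg hki]
        rw [tA, Fin.sum_univ_eq_sum_range (fun m => θ ^ m) ((i : ℕ) + 1)]
  rw [Finset.sum_congr rfl hinner]
  -- reindex the outer sum over p
  rw [Finset.sum_filter]
  rw [Fin.sum_univ_eq_sum_range (fun p => if k ≤ p then
      ∏ m ∈ Finset.range N, (if m = p then (1:ℝ) else if k ≤ m then θ * tA m θ else tA (m + 1) θ)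
    else 0) N]
  have hIco : Finset.Ico k N = (Finset.range N).filter (fun p => k ≤ p) := by
    ext m; simp only [Finset.mem_Ico, Finset.mem_range, mem_filter]; omega
  have hcg : ∀ p ∈ Finset.range N,
      (if k ≤ p then
        ∏ m ∈ Finset.range N, (if m = p then (1:ℝ) else if k ≤ m then θ * tA m θ else tA (m + 1) θ)
      else 0)
      = (if k ≤ p then qfact k θ * ∏ i ∈ (Finset.Ico k N).erase p, (θ * tA i θ) else 0) := by
    intro p hp
    rw [Finset.mem_range] at hp
    by_cases hkp : k ≤ p
    · rw [if_pos hkp, if_pos hkp]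
      have hkN : k ≤ N := le_of_lt (lt_of_le_of_lt hkp hp)
      rw [Finset.range_eq_Ico, ← Finset.prod_Ico_consecutive _ (Nat.zero_le k) hkN]
      have hA : (∏ m ∈ Finset.Ico 0 k,
          (if m = p then (1:ℝ) else if k ≤ m then θ * tA m θ else tA (m + 1) θ)) = qfact k θ := by
        rw [← Finset.range_eq_Ico, qfact]
        refine Finset.prod_congr rfl (fun m hm => ?_)
        rw [Finset.mem_range] at hm
        rw [if_neg (by omega), if_neg (by omega)]
      have hB : (∏ m ∈ Finset.Ico k N,
          (if m = p then (1:ℝ) else if k ≤ m then θ * tA m θ else tA (m + 1) θ))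
          = ∏ i ∈ (Finset.Ico k N).erase p, (θ * tA i θ) := by
        have hpmem : p ∈ Finset.Ico k N := Finset.mem_Ico.2 ⟨hkp, hp⟩
        rw [← Finset.mul_prod_erase _ _ hpmem, if_pos rfl, one_mul]
        refine Finset.prod_congr rfl (fun m hm => ?_)
        rw [Finset.mem_erase, Finset.mem_Ico] at hm
        rw [if_neg hm.1, if_pos hm.2.1]
      rw [hA, hB]
    · rw [if_neg hkp, if_neg hkp]
  rw [Finset.sum_congr rfl hcg, ← Finset.sum_filter, ← hIco, ← Finset.mul_sum]

/-! ### Positivity -/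

lemma tA_pos {θ : ℝ} (h0 : 0 < θ) {n : ℕ} (hn : 1 ≤ n) : 0 < tA n θ := by
  rw [tA]
  exact Finset.sum_pos (fun m _ => pow_pos h0 m) ⟨0, Finset.mem_range.2 (by omega)⟩

lemma qfact_pos {θ : ℝ} (h0 : 0 < θ) (n : ℕ) : 0 < qfact n θ :=
  Finset.prod_pos (fun m _ => tA_pos h0 (Nat.succ_le_succ (Nat.zero_le m)))


open Filter in
/-- in the Mallows model with fixed `0 < θ < 1` and fixed `j ≥ 1`,
rejecting all but the last `j` candidates has limiting success probability
`lim_{N→∞} W(N, N−j)/[N]_θ! = j·θ^{j−1}·(1−θ)`. -/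
theorem mallows_right_justified_limit (θ : ℝ) (h0 : 0 < θ) (h1 : θ < 1)
    (j : ℕ) (hj : 1 ≤ j) :
    Filter.Tendsto (fun N => WM N (N - j) θ / qfact N θ) Filter.atTop
      (nhds ((j : ℝ) * θ ^ (j - 1) * (1 - θ))) := by
  classical
  have hθne : θ ≠ 0 := ne_of_gt h0
  have h1θ : (1 : ℝ) - θ ≠ 0 := by linarith
  have hc : ((1 : ℝ) - θ)⁻¹ ≠ 0 := inv_ne_zero h1θ
  have hgeo : Tendsto (fun n : ℕ => tA n θ) atTop (nhds (1 - θ)⁻¹) :=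
    (hasSum_geometric_of_lt_one (le_of_lt h0) h1).tendsto_sum_nat
  have hshift : ∀ t : ℕ, Tendsto (fun N : ℕ => N - j + t) atTop atTop := by
    intro t
    exact Filter.tendsto_atTop.mpr fun b => Filter.eventually_atTop.2 ⟨b + j, fun N hN => by omega⟩
  have htA : ∀ t : ℕ, Tendsto (fun N : ℕ => tA (N - j + t) θ) atTop (nhds (1 - θ)⁻¹) :=
    fun t => hgeo.comp (hshift t)
  set L : ℝ := (θ * (1 - θ)⁻¹) ^ j / ((θ * (1 - θ)⁻¹) * ((1 - θ)⁻¹) ^ j) with hL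
  set g : ℕ → ℕ → ℝ := fun m N =>
      (∏ t ∈ Finset.range j, (θ * tA (N - j + t) θ)) /
        ((θ * tA (N - j + m) θ) * ∏ t ∈ Finset.range j, tA (N - j + t + 1) θ) with hg
  have hgm : ∀ m : ℕ, Tendsto (fun N : ℕ => g m N) atTop (nhds L) := by
    intro m
    have hnum : Tendsto (fun N : ℕ => ∏ t ∈ Finset.range j, (θ * tA (N - j + t) θ)) atTop
        (nhds ((θ * (1 - θ)⁻¹) ^ j)) := by
      have := tendsto_finset_prod (Finset.range j)
        (fun t _ => (tendsto_const_nhds.mul (htA t) :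
          Tendsto (fun N : ℕ => θ * tA (N - j + t) θ) atTop (nhds (θ * (1 - θ)⁻¹))))
      simpa [Finset.prod_const, Finset.card_range] using this
    have hden1 : Tendsto (fun N : ℕ => ∏ t ∈ Finset.range j, tA (N - j + t + 1) θ) atTop
        (nhds (((1 - θ)⁻¹) ^ j)) := by
      have := tendsto_finset_prod (Finset.range j)
        (fun t _ => (htA (t + 1) :
          Tendsto (fun N : ℕ => tA (N - j + (t + 1)) θ) atTop (nhds ((1 - θ)⁻¹))))
      simpa [Finset.prod_const, Finset.card_range, ← Nat.add_assoc] using this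
    have hden : Tendsto (fun N : ℕ =>
        (θ * tA (N - j + m) θ) * ∏ t ∈ Finset.range j, tA (N - j + t + 1) θ) atTop
        (nhds ((θ * (1 - θ)⁻¹) * ((1 - θ)⁻¹) ^ j)) :=
      (tendsto_const_nhds.mul (htA m)).mul hden1
    have hne : (θ * (1 - θ)⁻¹) * ((1 - θ)⁻¹) ^ j ≠ 0 :=
      mul_ne_zero (mul_ne_zero hθne hc) (pow_ne_zero _ hc)
    exact hnum.div hden hne
  have hLval : L = θ ^ (j - 1) * (1 - θ) := by
    obtain ⟨j', rfl⟩ : ∃ j', j = j' + 1 := ⟨j - 1, by omega⟩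
    rw [hL]
    simp only [Nat.add_sub_cancel]
    rw [mul_pow]
    field_simp
    ring
  have hsum : Tendsto (fun N : ℕ => ∑ m ∈ Finset.range j, g m N) atTop
      (nhds ((j : ℝ) * θ ^ (j - 1) * (1 - θ))) := by
    have := tendsto_finset_sum (Finset.range j) (fun m _ => hgm m)
    simp only [Finset.sum_const, Finset.card_range, nsmul_eq_mul] at this
    rw [hLval] at this
    simpa [mul_assoc] using this
  refine Tendsto.congr' ?_ hsum
  rw [Filter.eventuallyEq_iff_exists_mem]
  refine ⟨{N | j + 1 ≤ N}, Filter.mem_atTop (j + 1), fun N hN => ?_⟩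
  simp only [Set.mem_setOf_eq] at hN
  symm
  show WM N (N - j) θ / qfact N θ = ∑ m ∈ Finset.range j, g m N
  simp only [hg]
  set k := N - j with hk
  have hk1 : 1 ≤ k := by omega
  have hkN : k ≤ N := by omega
  have hNk : N - k = j := by omega
  have htApos : ∀ i ∈ Finset.Ico k N, (0:ℝ) < θ * tA i θ := by
    intro i hi
    rw [Finset.mem_Ico] at hi
    exact mul_pos h0 (tA_pos h0 (le_trans hk1 hi.1))
  have hq : qfact N θ = qfact k θ * ∏ i ∈ Finset.Ico k N, tA (i + 1) θ := by
    rw [qfact, qfact, Finset.range_eq_Ico,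
      ← Finset.prod_Ico_consecutive (fun n => tA (n + 1) θ) (Nat.zero_le k) hkN, Finset.range_eq_Ico]
  have hDpos : (0:ℝ) < ∏ i ∈ Finset.Ico k N, tA (i + 1) θ :=
    Finset.prod_pos (fun i _ => tA_pos h0 (Nat.succ_le_succ (Nat.zero_le i)))
  rw [WM_formula, hq]
  rw [mul_div_mul_left _ _ (ne_of_gt (qfact_pos h0 k))]
  rw [Finset.sum_div]
  have hterm : ∀ p ∈ Finset.Ico k N,
      (∏ i ∈ (Finset.Ico k N).erase p, (θ * tA i θ)) / (∏ i ∈ Finset.Ico k N, tA (i + 1) θ)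
      = (∏ i ∈ Finset.Ico k N, (θ * tA i θ)) /
          ((θ * tA p θ) * ∏ i ∈ Finset.Ico k N, tA (i + 1) θ) := by
    intro p hp
    have hpe : (∏ i ∈ (Finset.Ico k N).erase p, (θ * tA i θ))
        = (∏ i ∈ Finset.Ico k N, (θ * tA i θ)) / (θ * tA p θ) := by
      rw [eq_div_iff (ne_of_gt (htApos p hp)), mul_comm]
      exact Finset.mul_prod_erase (Finset.Ico k N) (fun i => θ * tA i θ) hp
    rw [hpe, div_div]
  rw [Finset.sum_congr rfl hterm]
  rw [Finset.sum_Ico_eq_sum_range, hNk]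
  have hP : (∏ i ∈ Finset.Ico k N, (θ * tA i θ))
      = ∏ t ∈ Finset.range j, (θ * tA (k + t) θ) := by
    rw [Finset.prod_Ico_eq_prod_range, hNk]
  have hD : (∏ i ∈ Finset.Ico k N, tA (i + 1) θ)
      = ∏ t ∈ Finset.range j, tA (k + t + 1) θ := by
    rw [Finset.prod_Ico_eq_prod_range, hNk]
  rw [hP, hD]
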